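/- Let 1 < p < ∞ with conjugate exponent p', v a weight sequence with (v_{n+1}/v_n) bounded, r, s nonzero reals, and L₁ := liminf_n v_{n+1}/v_n. If α ∈ ℂ satisfies |r - α| < L₁|s|, then the sequence (((α - r)/s)^n)_{n≥0} belongs to l_{p'}(1/v); hence α is an eigenvalue of the adjoint B*(r,s) acting on l_{p'}(1/v). -/

import Mathlib

open Filter

/-- Let `1 < p < ∞` with conjugate exponent `p'`, let `v` be a weight with
`(v_{n+1}/v_n)` bounded, `r, s` nonzero reals and `L₁ := liminf_n v_{n+1}/v_n`.  If
`|r - α| < L₁ |s|`, then the sequence `(((α-r)/s)^n)_n` belongs to `l_{p'}(1/v)`; it is an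
eigenvector of the adjoint `B*(r,s)` (which acts by `(B*(r,s)x)_n = r x_n + s x_{n+1}`)
with eigenvalue `α`. -/
theorem stmt8 (p q : ℝ) (hpq : p.HolderConjugate q)
    (v : ℕ → ℝ) (hv : ∀ n, 0 < v n) (hbd : ∃ M : ℝ, ∀ n, v (n + 1) / v n ≤ M)
    (r s : ℝ) (hr : r ≠ 0) (hs : s ≠ 0)
    (L₁ : ℝ) (hL₁ : L₁ = liminf (fun n => v (n + 1) / v n) atTop)
    (α : ℂ) (hα : ‖α - (r : ℂ)‖ < L₁ * |s|) :
    Summable (fun n => (‖((α - (r : ℂ)) / (s : ℂ)) ^ n‖ / v n) ^ q) ∧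
      ∀ n : ℕ, (r : ℂ) * ((α - (r : ℂ)) / (s : ℂ)) ^ n
          + (s : ℂ) * ((α - (r : ℂ)) / (s : ℂ)) ^ (n + 1)
        = α * ((α - (r : ℂ)) / (s : ℂ)) ^ n := by
  have hs' : (s : ℂ) ≠ 0 := by exact_mod_cast hs
  have hsa : (0 : ℝ) < |s| := abs_pos.mpr hs
  set z : ℂ := (α - (r : ℂ)) / (s : ℂ) with hz
  set ρ : ℝ := ‖z‖ with hρ
  have hρ0 : 0 ≤ ρ := norm_nonneg _
  have hzval : ρ = ‖α - (r : ℂ)‖ / |s| := by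
    rw [hρ, hz, norm_div, Complex.norm_real, Real.norm_eq_abs]
  have hρL : ρ < L₁ := by
    rw [hzval, div_lt_iff₀ hsa]; exact hα
  have hq0 : 0 < q := hpq.symm.pos
  constructor
  · set c : ℝ := (ρ + L₁) / 2 with hc
    have hρc : ρ < c := by rw [hc]; linarith
    have hcL : c < L₁ := by rw [hc]; linarith
    have hc0 : 0 < c := lt_of_le_of_lt hρ0 hρc
    have hev : ∀ᶠ n in atTop, c < v (n + 1) / v n := by
      exact eventually_lt_of_lt_liminf (hL₁ ▸ hcL)
        ⟨0, eventually_map.2 (Eventually.of_forall fun n =>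
          (div_pos (hv _) (hv _)).le)⟩
    apply summable_of_ratio_norm_eventually_le (r := (ρ / c) ^ q)
    · exact Real.rpow_lt_one (div_nonneg hρ0 hc0.le)
        ((div_lt_one hc0).mpr hρc) hq0
    · filter_upwards [hev] with n hn
      have hvn := hv n
      have hvn1 := hv (n + 1)
      have h1 : c * v n < v (n + 1) := (lt_div_iff₀ hvn).mp hn
      have ha : (0:ℝ) ≤ ‖z ^ n‖ / v n := div_nonneg (norm_nonneg _) hvn.le
      have ha1 : (0:ℝ) ≤ ‖z ^ (n+1)‖ / v (n+1) :=
        div_nonneg (norm_nonneg _) hvn1.le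
      rw [Real.norm_of_nonneg (Real.rpow_nonneg ha1 q),
        Real.norm_of_nonneg (Real.rpow_nonneg ha q),
        ← Real.mul_rpow (div_nonneg hρ0 hc0.le) ha]
      apply Real.rpow_le_rpow ha1 _ hq0.le
      have key : ‖z ^ (n+1)‖ / v (n+1) ≤ ‖z ^ (n+1)‖ / (c * v n) := by
        gcongr
      refine key.trans (le_of_eq ?_)
      rw [norm_pow, norm_pow, ← hρ, pow_succ]
      field_simp
  · intro n
    have : (s : ℂ) * z = α - (r : ℂ) := by
      rw [hz]; field_simp
    rw [pow_succ, ← mul_assoc, mul_comm ((s:ℂ)) (z ^ n), mul_assoc, this]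
    ring
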